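/- Let p be an even positive integer and d ≥ 1, and let S ⊂ ℝ^d be a 1-equilateral set in ℓ_p^d. Then the family of polynomials {P_a : a ∈ S}, where P_a(x) = −1 + ∑_{i=1}^d (x_i − a_i)^p is a polynomial in the variables x_1, …, x_d, is linearly independent over ℝ; consequently |S| ≤ (p − 1)·d + 2. -/

import Mathlib

open MvPolynomial

/-- If `p` is an even positive integer and `S ⊂ ℝ^d` is `1`-equilateral in `ℓ_p^d`,
then the polynomials `P_a(x) = -1 + ∑ i, (x_i - a_i)^p` for `a ∈ S` are linearly
independent over `ℝ`, and consequently `|S| ≤ (p - 1) d + 2`. -/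
theorem equilateral_polynomials_linearIndependent (p d : ℕ) (hp : Even p) (hp0 : 0 < p)
    (hd : 1 ≤ d) (S : Finset (Fin d → ℝ))
    (hS : ∀ x ∈ S, ∀ y ∈ S, x ≠ y → (∑ i, |x i - y i| ^ (p : ℝ)) ^ (1 / (p : ℝ)) = 1) :
    LinearIndependent ℝ (fun a : S =>
      (MvPolynomial.C (-1) + ∑ i, (MvPolynomial.X i - MvPolynomial.C (a.1 i)) ^ p :
        MvPolynomial (Fin d) ℝ)) ∧
    S.card ≤ (p - 1) * d + 2 := by
  classical
  set P : (Fin d → ℝ) → MvPolynomial (Fin d) ℝ :=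
    fun a => C (-1) + ∑ i, (X i - C (a i)) ^ p with hPdef
  have hdist : ∀ x ∈ S, ∀ y ∈ S, x ≠ y → (∑ i, (x i - y i) ^ p) = 1 := by
    intro x hx y hy hxy
    have h := hS x hx y hy hxy
    have hnn : (0:ℝ) ≤ ∑ i, |x i - y i| ^ (p:ℝ) :=
      Finset.sum_nonneg fun i _ => Real.rpow_nonneg (abs_nonneg _) _
    have hpne : (p:ℝ) ≠ 0 := by exact_mod_cast hp0.ne'
    have h1 : ∑ i, |x i - y i| ^ (p:ℝ) = 1 := by
      have h2 := congrArg (· ^ (p:ℝ)) h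
      change ((∑ i, |x i - y i| ^ (p:ℝ)) ^ (1 / (p:ℝ))) ^ (p:ℝ) = (1:ℝ) ^ (p:ℝ) at h2
      rw [← Real.rpow_mul hnn, one_div, inv_mul_cancel₀ hpne, Real.rpow_one] at h2
      simpa using h2
    calc ∑ i, (x i - y i)^p = ∑ i, |x i - y i|^p :=
          Finset.sum_congr rfl fun i _ => (hp.pow_abs _).symm
      _ = 1 := by
          rw [← h1]
          exact Finset.sum_congr rfl fun i _ => (Real.rpow_natCast _ p).symm
  have heval : ∀ a b : Fin d → ℝ, eval b (P a) = -1 + ∑ i, (b i - a i) ^ p := by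
    intro a b; simp [hPdef]
  -- linear independence
  have hli : LinearIndependent ℝ (fun a : S => P a.1) := by
    rw [Fintype.linearIndependent_iff]
    intro g hg a
    have h := congrArg (eval a.1) hg
    simp only [map_sum, smul_eq_C_mul, map_mul, eval_C, heval, map_zero] at h
    rw [Finset.sum_eq_single a] at h
    · have hz : ∑ i, (a.1 i - a.1 i) ^ p = 0 := by
        simp [zero_pow hp0.ne']
      rw [hz] at h
      linarith
    · intro b _ hba
      have hba' : a.1 ≠ b.1 := fun hh => hba (Subtype.ext hh.symm)
      rw [hdist a.1 a.2 b.1 b.2 hba']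
      ring
    · simp
  constructor
  · exact hli
  -- cardinality bound
  set B : (Fin d × Fin (p-1)) ⊕ Fin 2 → MvPolynomial (Fin d) ℝ :=
    fun t => match t with
      | .inl (i,k) => X i ^ (k.1+1)
      | .inr 0 => 1
      | .inr 1 => ∑ i, X i ^ p
    with hB
  set V := Submodule.span ℝ (Set.range B) with hV
  have hXmem : ∀ (i : Fin d) (k : ℕ), k < p → (X i ^ k : MvPolynomial (Fin d) ℝ) ∈ V := by
    intro i k hk
    match k with
    | 0 =>
      have : (X i ^ 0 : MvPolynomial (Fin d) ℝ) = B (.inr 0) := by simp [hB]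
      rw [this]; exact Submodule.subset_span ⟨Sum.inr 0, rfl⟩
    | m+1 =>
      have hm : m < p - 1 := by omega
      have : (X i ^ (m+1) : MvPolynomial (Fin d) ℝ) = B (.inl (i, ⟨m, hm⟩)) := rfl
      rw [this]; exact Submodule.subset_span ⟨Sum.inl (i, ⟨m, hm⟩), rfl⟩
  have hmem : ∀ a : Fin d → ℝ, P a ∈ V := by
    intro a
    have expand : ∀ i : Fin d, (X i - C (a i) : MvPolynomial (Fin d) ℝ)^p
        = X i ^ p + ∑ k ∈ Finset.range p,
            ((-(a i))^(p-k) * (p.choose k : ℝ)) • (X i ^ k) := by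
      intro i
      rw [sub_eq_add_neg, ← C_neg, add_pow, Finset.sum_range_succ, add_comm]
      congr 1
      · simp
      · refine Finset.sum_congr rfl fun k hk => ?_
        rw [smul_eq_C_mul, map_mul, map_pow, map_natCast]
        ring
    have key : P a = C (-1) + ((∑ i, X i ^ p) + ∑ i : Fin d, ∑ k ∈ Finset.range p,
        ((-(a i))^(p-k) * (p.choose k : ℝ)) • (X i ^ k)) := by
      rw [hPdef]
      simp only [expand]
      rw [Finset.sum_add_distrib]
    rw [key]
    refine Submodule.add_mem _ ?_ (Submodule.add_mem _ ?_ ?_)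
    · have : (C (-1) : MvPolynomial (Fin d) ℝ) = (-1 : ℝ) • B (.inr 0) := by
        simp [hB, smul_eq_C_mul]
      rw [this]
      exact Submodule.smul_mem _ _ (Submodule.subset_span ⟨Sum.inr 0, rfl⟩)
    · exact Submodule.subset_span ⟨Sum.inr 1, rfl⟩
    · refine Submodule.sum_mem _ fun i _ => Submodule.sum_mem _ fun k hk => ?_
      exact Submodule.smul_mem _ _ (hXmem i k (Finset.mem_range.mp hk))
  have hfin : Module.Finite ℝ V := FiniteDimensional.span_of_finite ℝ (Set.finite_range B)
  let g : S → V := fun a => ⟨P a.1, hmem a.1⟩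
  have hgli : LinearIndependent ℝ g := by
    apply LinearIndependent.of_comp V.subtype
    exact hli
  have h1 : Fintype.card S ≤ Module.finrank ℝ V := hgli.fintype_card_le_finrank
  have h2 : Module.finrank ℝ V ≤ (p-1) * d + 2 := by
    have := finrank_range_le_card (R := ℝ) B
    rw [Set.finrank] at this
    simpa [Fintype.card_sum, Fintype.card_prod, mul_comm] using this
  calc S.card = Fintype.card S := (Fintype.card_coe S).symm
    _ ≤ _ := h1
    _ ≤ _ := h2
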